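/- For the relation R = {1100, 1010, 1110, 0001} ⊆ {0,1}⁴, the relation (x≠y) = {01,10} equals R(x,x,x,y) (identification of variables), but {01,10} cannot be obtained from R by substitution of constants alone, nor as a conjunction of relations obtained from R by substitution of constants. -/
import Mathlib

set_option maxRecDepth 4000

/-- The binary disequality relation {01, 10}. -/
def NeqRel : Set (Fin 2 → Bool) := {x | x 0 ≠ x 1}

/-- Substitution of constants turning a 4-ary relation into a binary relation:
each position gets a variable or a constant, each variable used at most once. -/
def subst42 (ξ : Fin 4 → (Fin 2 ⊕ Bool)) (R : Set (Fin 4 → Bool)) : Set (Fin 2 → Bool) :=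
  {x | (fun i => Sum.elim x id (ξ i)) ∈ R}

def InjOnVars (ξ : Fin 4 → (Fin 2 ⊕ Bool)) : Prop :=
  ∀ i i' j, ξ i = Sum.inl j → ξ i' = Sum.inl j → i = i'

def R0 : Set (Fin 4 → Bool) :=
  {![true,true,false,false], ![true,false,true,false],
   ![true,true,true,false], ![false,false,false,true]}

lemma memR0 (f : Fin 4 → Bool) : f ∈ R0 ↔
    f = ![true,true,false,false] ∨ f = ![true,false,true,false] ∨
    f = ![true,true,true,false] ∨ f = ![false,false,false,true] := by
  simp [R0, Set.mem_insert_iff]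

lemma key : ∀ ξ : Fin 4 → (Fin 2 ⊕ Bool), InjOnVars ξ →
    ![true,false] ∈ subst42 ξ R0 → ![false,true] ∈ subst42 ξ R0 →
    ![true,true] ∈ subst42 ξ R0 := by
  have : ∀ ξ : Fin 4 → (Fin 2 ⊕ Bool), InjOnVars ξ →
      (fun i => Sum.elim (![true,false] : Fin 2 → Bool) id (ξ i)) ∈ R0 →
      (fun i => Sum.elim (![false,true] : Fin 2 → Bool) id (ξ i)) ∈ R0 →
      (fun i => Sum.elim (![true,true] : Fin 2 → Bool) id (ξ i)) ∈ R0 := by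
    simp only [memR0, InjOnVars, funext_iff]
    decide
  exact this

lemma tf_mem : ![true,false] ∈ NeqRel := by simp [NeqRel]
lemma ft_mem : ![false,true] ∈ NeqRel := by simp [NeqRel]
lemma tt_not_mem : ![true,true] ∉ NeqRel := by simp [NeqRel]

lemma part1 : {p : Fin 2 → Bool | (![p 0, p 0, p 0, p 1] : Fin 4 → Bool) ∈ R0} = NeqRel := by
  ext p
  have h : ∀ q : Fin 2 → Bool, q = ![q 0, q 1] := by
    intro q; funext i; fin_cases i <;> rfl
  rw [h p]
  simp only [Set.mem_setOf_eq, memR0, NeqRel, funext_iff]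
  revert p
  have : ∀ a b : Bool,
      ((∀ i, (![a,a,a,b] : Fin 4 → Bool) i = ![true,true,false,false] i) ∨
       (∀ i, (![a,a,a,b] : Fin 4 → Bool) i = ![true,false,true,false] i) ∨
       (∀ i, (![a,a,a,b] : Fin 4 → Bool) i = ![true,true,true,false] i) ∨
       (∀ i, (![a,a,a,b] : Fin 4 → Bool) i = ![false,false,false,true] i)) ↔
      ((![a,b] : Fin 2 → Bool) 0 ≠ (![a,b] : Fin 2 → Bool) 1) := by decide
  intro p
  exact this (p 0) (p 1)

theorem neq_by_identification_not_by_constants :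
    let R : Set (Fin 4 → Bool) :=
      {![true,true,false,false], ![true,false,true,false],
       ![true,true,true,false], ![false,false,false,true]}
    -- (x ≠ y) = R(x,x,x,y)
    {p : Fin 2 → Bool | (![p 0, p 0, p 0, p 1] : Fin 4 → Bool) ∈ R} = NeqRel ∧
    -- but (x ≠ y) is not obtainable from R by substitution of constants alone
    (∀ ξ : Fin 4 → (Fin 2 ⊕ Bool), InjOnVars ξ → subst42 ξ R ≠ NeqRel) ∧
    -- nor as a conjunction (intersection) of relations obtained from R
    -- by substitution of constants
    ¬ ∃ F : Set (Set (Fin 2 → Bool)),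
        (∀ T ∈ F, ∃ ξ : Fin 4 → (Fin 2 ⊕ Bool), InjOnVars ξ ∧ T = subst42 ξ R) ∧
        ⋂₀ F = NeqRel := by
  intro R
  refine ⟨part1, ?_, ?_⟩
  · intro ξ hξ h
    have h' : subst42 ξ R0 = NeqRel := h
    have htt : ![true,true] ∈ subst42 ξ R0 :=
      key ξ hξ (h' ▸ tf_mem) (h' ▸ ft_mem)
    exact tt_not_mem (h' ▸ htt)
  · rintro ⟨F, hF, hInt⟩
    have htt : ![true,true] ∈ ⋂₀ F := by
      intro T hT
      obtain ⟨ξ, hξ, rfl⟩ := hF T hT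
      have hsub : NeqRel ⊆ subst42 ξ R0 := by
        intro x hx
        exact (hInt ▸ hx : x ∈ ⋂₀ F) _ hT
      exact key ξ hξ (hsub tf_mem) (hsub ft_mem)
    exact tt_not_mem (hInt ▸ htt)
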